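/- Let $A = M_n(k)$ be the full matrix algebra over a commutative ring $k$ with matrix units $e_{jk}$. Define $x\circ y$ to be ordinary matrix multiplication with unit $e = \sum_j e_{jj}$, and define $\star$ to be the Hadamard (entrywise) product, determined by $e_{jk}\star e_{lm} = \delta_{jl}\delta_{km}e_{jk}$, with unit $i = \sum_{j,k} e_{jk}$. Then $(A, \circ, e, \star, i)$ is a double algebra. -/
import Mathlib


/-- A double algebra over a commutative ring `k`: a `k`-module `A` with two
associative unital bilinear multiplications, the vertical `vmul` (written `∘` in the
paper, unit `e`) and the horizontal `hmul` (written `⋆`, unit `i`), satisfying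
axioms A1–A8 of Szlachányi's Definition 1.1. -/
structure DoubleAlgebra (k : Type*) (A : Type*) [CommRing k] [AddCommGroup A]
    [Module k A] where
  vmul : A →ₗ[k] A →ₗ[k] A
  hmul : A →ₗ[k] A →ₗ[k] A
  e : A
  i : A
  vmul_assoc : ∀ a b c, vmul (vmul a b) c = vmul a (vmul b c)
  hmul_assoc : ∀ a b c, hmul (hmul a b) c = hmul a (hmul b c)
  vmul_e : ∀ a, vmul a e = a
  e_vmul : ∀ a, vmul e a = a
  hmul_i : ∀ a, hmul a i = a
  i_hmul : ∀ a, hmul i a = a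
  A1 : ∀ a b, vmul (hmul a e) b = hmul (vmul (hmul a e) i) b
  A2 : ∀ a b, vmul a (hmul b e) = hmul (vmul i (hmul b e)) a
  A3 : ∀ a b, hmul (vmul a i) b = vmul (hmul (vmul a i) e) b
  A4 : ∀ a b, hmul a (vmul b i) = vmul (hmul e (vmul b i)) a
  A5 : ∀ a b, vmul a (hmul e b) = hmul a (vmul i (hmul e b))
  A6 : ∀ a b, vmul (hmul e a) b = hmul b (vmul (hmul e a) i)
  A7 : ∀ a b, hmul a (vmul i b) = vmul a (hmul e (vmul i b))
  A8 : ∀ a b, hmul (vmul i a) b = vmul b (hmul (vmul i a) e)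

variable {k A : Type*} [CommRing k] [AddCommGroup A] [Module k A]

/-- `Φ_L(a) = a ⋆ e`. -/
def DoubleAlgebra.PhiL (D : DoubleAlgebra k A) (a : A) : A := D.hmul a D.e
/-- `Φ_R(a) = e ⋆ a`. -/
def DoubleAlgebra.PhiR (D : DoubleAlgebra k A) (a : A) : A := D.hmul D.e a
/-- `Φ_B(a) = a ∘ i`. -/
def DoubleAlgebra.PhiB (D : DoubleAlgebra k A) (a : A) : A := D.vmul a D.i
/-- `Φ_T(a) = i ∘ a`. -/
def DoubleAlgebra.PhiT (D : DoubleAlgebra k A) (a : A) : A := D.vmul D.i a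

/-- the full matrix algebra `M_n(k)` with the ordinary matrix product
as vertical product (unit the identity matrix) and the Hadamard (entrywise) product
as horizontal product (unit the all-ones matrix) is a double algebra. -/
theorem stmt12 {n : ℕ} :
    ∃ D : DoubleAlgebra k (Matrix (Fin n) (Fin n) k),
      (∀ a b : Matrix (Fin n) (Fin n) k, D.vmul a b = a * b) ∧
      (∀ a b : Matrix (Fin n) (Fin n) k, D.hmul a b = Matrix.hadamard a b) ∧
      D.e = (1 : Matrix (Fin n) (Fin n) k) ∧
      D.i = Matrix.of (fun _ _ => (1 : k)) := by

  classical
  refine ⟨{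
    vmul := LinearMap.mk₂ k (· * ·) add_mul (fun c a b => smul_mul_assoc c a b)
      mul_add (fun c a b => mul_smul_comm c a b)
    hmul := LinearMap.mk₂ k Matrix.hadamard
      (fun x y z => by ext j l; simp [Matrix.hadamard_apply, add_mul])
      (fun c a b => by ext j l; simp [Matrix.hadamard_apply, mul_assoc])
      (fun x y z => by ext j l; simp [Matrix.hadamard_apply, mul_add])
      (fun c a b => by ext j l; simp [Matrix.hadamard_apply, mul_left_comm])
    e := 1
    i := Matrix.of (fun _ _ => (1 : k))
    vmul_assoc := fun a b c => mul_assoc a b c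
    hmul_assoc := fun a b c => Matrix.hadamard_assoc a b c
    vmul_e := fun a => mul_one a
    e_vmul := fun a => one_mul a
    hmul_i := fun a => by ext j l; simp [LinearMap.mk₂_apply, Matrix.hadamard_apply]
    i_hmul := fun a => by ext j l; simp [LinearMap.mk₂_apply, Matrix.hadamard_apply]
    A1 := ?_, A2 := ?_, A3 := ?_, A4 := ?_,
    A5 := ?_, A6 := ?_, A7 := ?_, A8 := ?_ }, fun a b => rfl, fun a b => rfl, rfl, rfl⟩ <;>
  · intro a b
    ext j l
    simp [LinearMap.mk₂_apply, Matrix.hadamard_apply, Matrix.mul_apply, Matrix.one_apply, mul_ite, ite_mul,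
      Finset.mul_sum, Finset.sum_mul, mul_comm, mul_left_comm]
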